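/- (Rewriting of the velocity stabilization term.) Let b : Fin N → Fin N → ℝ be skew-symmetric (b j i = -b i j) with zero row sums (Σ_j b i j = 0 for every i), and let D : Fin N → Fin N → ℝ be symmetric (D i j = D j i) with zero row sums (Σ_j D i j = 0 for every i). Then for all u, v : Fin N → E, Σ_i ⟪v i, Σ_j (b i j + D i j) • u j⟫ = - Σ_{i < j} b i j·⟪u j + u i, v j - v i⟫ - Σ_{i < j} D i j·⟪u j - u i, v j - v i⟫. -/

import Mathlib

open scoped RealInnerProductSpace BigOperators

/-- For a symmetric function with zero diagonal, twice the strictly-upper-triangular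
sum equals the full sum. -/
lemma half_sum_aux {N : ℕ} (F : Fin N → Fin N → ℝ)
    (hsymm : ∀ i j, F j i = F i j) (hdiag : ∀ i, F i i = 0) :
    2 * ∑ i, ∑ j ∈ Finset.univ.filter (fun j => i < j), F i j = ∑ i, ∑ j, F i j := by
  have hsplit : ∀ i : Fin N, ∑ j, F i j
      = (∑ j ∈ Finset.univ.filter (fun j => i < j), F i j)
        + ∑ j ∈ Finset.univ.filter (fun j => j < i), F i j := by
    intro i
    rw [← Finset.sum_filter_add_sum_filter_not Finset.univ (fun j => i < j)]
    congr 1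
    rw [Finset.sum_filter, Finset.sum_filter]
    refine Finset.sum_congr rfl fun j _ => ?_
    rcases lt_trichotomy i j with h | h | h
    · simp [h, asymm h]
    · subst h; simp [hdiag, lt_irrefl]
    · simp [h, asymm h, not_lt.mpr h.le]
  have hswap : ∑ i, ∑ j ∈ Finset.univ.filter (fun j => j < i), F i j
      = ∑ i, ∑ j ∈ Finset.univ.filter (fun j => i < j), F i j := by
    simp only [Finset.sum_filter]
    rw [Finset.sum_comm]
    exact Finset.sum_congr rfl fun i _ => Finset.sum_congr rfl fun j _ => by
      by_cases h : i < j <;> simp [h, hsymm]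
  calc 2 * ∑ i, ∑ j ∈ Finset.univ.filter (fun j => i < j), F i j
      = (∑ i, ∑ j ∈ Finset.univ.filter (fun j => i < j), F i j)
        + ∑ i, ∑ j ∈ Finset.univ.filter (fun j => j < i), F i j := by rw [hswap]; ring
    _ = ∑ i, ∑ j, F i j := by
        rw [← Finset.sum_add_distrib]
        exact (Finset.sum_congr rfl fun i _ => (hsplit i).symm)

/-- Rewriting of the velocity stabilization term: for skew-symmetric `b` and
symmetric `D`, both with zero row sums,
`Σ_i ⟪v i, Σ_j (b i j + D i j) • u j⟫
  = -Σ_{i<j} b i j·⟪u j + u i, v j - v i⟫ - Σ_{i<j} D i j·⟪u j - u i, v j - v i⟫`. -/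
theorem velocity_stabilization_rewriting
    (d N : ℕ) (hd : 1 ≤ d) (hN : 1 ≤ N)
    (b D : Fin N → Fin N → ℝ)
    (hb_skew : ∀ i j, b j i = -b i j)
    (hb_rows : ∀ i, ∑ j, b i j = 0)
    (hD_symm : ∀ i j, D i j = D j i)
    (hD_rows : ∀ i, ∑ j, D i j = 0)
    (u v : Fin N → EuclideanSpace ℝ (Fin d)) :
    ∑ i, ⟪v i, ∑ j, (b i j + D i j) • u j⟫
      = (-∑ i, ∑ j ∈ Finset.univ.filter (fun j => i < j),
          b i j * ⟪u j + u i, v j - v i⟫)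
        - ∑ i, ∑ j ∈ Finset.univ.filter (fun j => i < j),
            D i j * ⟪u j - u i, v j - v i⟫ := by
  classical
  set p : Fin N → Fin N → ℝ := fun i j => ⟪v i, u j⟫ with hp
  have hb_col : ∀ j, ∑ i, b i j = 0 := by
    intro j
    have h1 : ∑ i, b i j = -∑ i, b j i := by
      rw [← Finset.sum_neg_distrib]
      exact Finset.sum_congr rfl fun i _ => hb_skew j i
    rw [h1, hb_rows j, neg_zero]
  have hD_col : ∀ j, ∑ i, D i j = 0 := by
    intro j
    have h1 : ∑ i, D i j = ∑ i, D j i :=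
      Finset.sum_congr rfl fun i _ => hD_symm i j
    rw [h1, hD_rows j]
  -- scalar form of the inner products
  have hbinner : ∀ i j : Fin N, ⟪u j + u i, v j - v i⟫ = p j j - p i j + p j i - p i i := by
    intro i j
    simp only [inner_add_left, inner_sub_right, hp]
    rw [real_inner_comm (u j) (v j), real_inner_comm (u j) (v i),
      real_inner_comm (u i) (v j), real_inner_comm (u i) (v i)]
    ring
  have hDinner : ∀ i j : Fin N, ⟪u j - u i, v j - v i⟫ = p j j - p i j - p j i + p i i := by
    intro i j
    simp only [inner_sub_left, inner_sub_right, hp]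
    rw [real_inner_comm (u j) (v j), real_inner_comm (u j) (v i),
      real_inner_comm (u i) (v j), real_inner_comm (u i) (v i)]
    ring
  set F : Fin N → Fin N → ℝ := fun i j =>
    b i j * (p j j - p i j + p j i - p i i) + D i j * (p j j - p i j - p j i + p i i) with hF
  have hFsymm : ∀ i j, F j i = F i j := by
    intro i j
    simp only [hF]
    rw [hb_skew i j, ← hD_symm i j]
    ring
  have hFdiag : ∀ i, F i i = 0 := by intro i; simp only [hF]; ring
  have hhalf := half_sum_aux F hFsymm hFdiag
  -- the full double sum of F
  have e1 : ∑ i, ∑ j : Fin N, b i j * p j j = 0 := by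
    rw [Finset.sum_comm]
    exact Finset.sum_eq_zero fun j _ => by rw [← Finset.sum_mul, hb_col j, zero_mul]
  have e2 : ∑ i, ∑ j : Fin N, D i j * p j j = 0 := by
    rw [Finset.sum_comm]
    exact Finset.sum_eq_zero fun j _ => by rw [← Finset.sum_mul, hD_col j, zero_mul]
  have e3 : ∑ i, ∑ j : Fin N, b i j * p i i = 0 :=
    Finset.sum_eq_zero fun i _ => by rw [← Finset.sum_mul, hb_rows i, zero_mul]
  have e4 : ∑ i, ∑ j : Fin N, D i j * p i i = 0 :=
    Finset.sum_eq_zero fun i _ => by rw [← Finset.sum_mul, hD_rows i, zero_mul]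
  have e5 : ∑ i, ∑ j : Fin N, b i j * p j i = -∑ i, ∑ j : Fin N, b i j * p i j := by
    rw [Finset.sum_comm]
    rw [show -∑ i, ∑ j : Fin N, b i j * p i j = ∑ i, ∑ j : Fin N, -(b i j * p i j) by
      simp [Finset.sum_neg_distrib]]
    exact Finset.sum_congr rfl fun x _ => Finset.sum_congr rfl fun y _ => by
      rw [hb_skew x y, neg_mul]
  have e6 : ∑ i, ∑ j : Fin N, D i j * p j i = ∑ i, ∑ j : Fin N, D i j * p i j := by
    rw [Finset.sum_comm]
    exact Finset.sum_congr rfl fun x _ => Finset.sum_congr rfl fun y _ => by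
      rw [hD_symm y x]
  have hfull : ∑ i, ∑ j, F i j
      = -(2 * ∑ i, ∑ j : Fin N, (b i j + D i j) * p i j) := by
    have hexp : ∀ i j, F i j
        = b i j * p j j - b i j * p i j + b i j * p j i - b i j * p i i
          + (D i j * p j j - D i j * p i j - D i j * p j i + D i j * p i i) := by
      intro i j; simp only [hF]; ring
    calc ∑ i, ∑ j, F i j
        = ∑ i, ∑ j : Fin N,
            (b i j * p j j - b i j * p i j + b i j * p j i - b i j * p i i
              + (D i j * p j j - D i j * p i j - D i j * p j i + D i j * p i i)) :=
          Finset.sum_congr rfl fun i _ => Finset.sum_congr rfl fun j _ => hexp i j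
      _ = -(2 * ∑ i, ∑ j : Fin N, (b i j + D i j) * p i j) := by
          simp only [Finset.sum_add_distrib, Finset.sum_sub_distrib, add_mul]
          rw [e1, e2, e3, e4, e5, e6]
          ring
  -- rewrite LHS
  have hLHS : ∑ i, ⟪v i, ∑ j, (b i j + D i j) • u j⟫
      = ∑ i, ∑ j : Fin N, (b i j + D i j) * p i j := by
    refine Finset.sum_congr rfl fun i _ => ?_
    rw [inner_sum]
    exact Finset.sum_congr rfl fun j _ => real_inner_smul_right _ _ _
  -- rewrite RHS
  have hRHS : ((-∑ i, ∑ j ∈ Finset.univ.filter (fun j => i < j),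
          b i j * ⟪u j + u i, v j - v i⟫)
        - ∑ i, ∑ j ∈ Finset.univ.filter (fun j => i < j),
            D i j * ⟪u j - u i, v j - v i⟫)
      = -∑ i, ∑ j ∈ Finset.univ.filter (fun j => i < j), F i j := by
    simp only [hbinner, hDinner, hF, Finset.sum_add_distrib]
    ring
  rw [hLHS, hRHS]
  linarith [hhalf, hfull]
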